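/- In the setting of the Gauss map of an oriented timelike surface M ⊂ ℝ^{3,1} with canonical null direction and II(Z^⊤,Z^⊤) ≠ 0, the complex quadratic form G*H (pull-back by the Gauss map of H(η,η') = ⟨η,η'⟩ + i η∧η') satisfies H(dG(Z^⊤),dG(Z^⊤)) = -2|II(Z^⊤,Z^⊤)|⟨H,ν⟩, H(dG(W),dG(W)) = -2(⟨H,ν⟩/|II(Z^⊤,Z^⊤)|)(|H|² - K - iK_N), and H(dG(Z^⊤),dG(W)) = (2|H|² - K) - iK_N. Consequently the discriminant -det(G*H) equals -(K + iK_N)², and G*H vanishes identically iff M is minimal with flat normal bundle. -/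
import Mathlib


/-- The pull-back G*H of the ℂ-bilinear form H(η,η') = ⟨η,η'⟩ + i η∧η' by the Gauss
map, in the setting N₁ = Z^⊥∧W, N₂ = Z^⊥∧Z^⊤ with H(N₁,N₁) = H(N₂,N₂) = 0,
H(N₁,N₂) = -1, dG(Z^⊤) = i|II|N₁ - i⟨H,ν⟩N₂, dG(W) = -i⟨H,ν⟩N₁ + (K_N/|II| +
i(|H|²-K)/|II|)N₂ (|II| = |II(Z^⊤,Z^⊤)| > 0, |H|² = ⟨H,ν⟩², K_N = 0 → K = 0):
H(dG(Z^⊤),dG(Z^⊤)) = -2|II|⟨H,ν⟩, H(dG(W),dG(W)) = -2(⟨H,ν⟩/|II|)(|H|²-K-iK_N),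
H(dG(Z^⊤),dG(W)) = (2|H|²-K) - iK_N; the discriminant -det G*H equals -(K+iK_N)²,
and G*H ≡ 0 iff M is minimal (⟨H,ν⟩ = 0) with flat normal bundle (K_N = 0). -/
theorem stmt19 (Mp : Type) (B : Type) [AddCommGroup B] [Module (Mp → ℂ) B]
    (Hc : B → B → Mp → ℂ)
    (Hc_symm : ∀ x y, Hc x y = Hc y x)
    (Hc_addl : ∀ x y z, Hc (x + y) z = Hc x z + Hc y z)
    (Hc_smull : ∀ (c : Mp → ℂ) (x y : B), Hc (c • x) y = c * Hc x y)
    (N1 N2 : B)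
    (h11 : Hc N1 N1 = 0) (h22 : Hc N2 N2 = 0)
    (h12 : Hc N1 N2 = fun _ => (-1 : ℂ))
    (a nII mH hsq K KN : Mp → ℝ)
    (hnII : ∀ p, 0 < nII p)
    (hKN : KN = a * nII)
    (hsqdef : hsq = mH ^ 2)
    (hflat : KN = 0 → K = 0)
    (dGZ dGW : B)
    (hdGZ : dGZ = ((fun p => Complex.I * (nII p : ℂ)) • N1)
        - ((fun p => Complex.I * (mH p : ℂ)) • N2))
    (hdGW : dGW = (-((fun p => Complex.I * (mH p : ℂ)) • N1))
        + ((fun p => ((KN p / nII p : ℝ) : ℂ)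
            + Complex.I * ((hsq p - K p) / nII p : ℝ)) • N2)) :
    Hc dGZ dGZ = (fun p => ((-2 * nII p * mH p : ℝ) : ℂ))
    ∧ Hc dGW dGW
        = (fun p => -2 * ((mH p / nII p : ℝ) : ℂ)
            * (((hsq p - K p : ℝ) : ℂ) - Complex.I * (KN p : ℂ)))
    ∧ Hc dGZ dGW = (fun p => ((2 * hsq p - K p : ℝ) : ℂ) - Complex.I * (KN p : ℂ))
    ∧ -((Hc dGZ dGW) ^ 2 - Hc dGZ dGZ * Hc dGW dGW)
        = (fun p => -((K p : ℂ) + Complex.I * (KN p : ℂ)) ^ 2)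
    ∧ ((Hc dGZ dGZ = 0 ∧ Hc dGZ dGW = 0 ∧ Hc dGW dGW = 0) ↔ (mH = 0 ∧ KN = 0)) := by
 
  subst hsqdef
  have addr : ∀ x y z, Hc x (y + z) = Hc x y + Hc x z := by
    intro x y z; rw [Hc_symm, Hc_addl, Hc_symm y x, Hc_symm z x]
  have smulr : ∀ (c : Mp → ℂ) x y, Hc x (c • y) = c * Hc x y := by
    intro c x y; rw [Hc_symm, Hc_smull, Hc_symm]
  have negl : ∀ x y, Hc (-x) y = -Hc x y := by
    intro x y
    rw [show -x = (-1 : Mp → ℂ) • x from (neg_one_smul _ x).symm, Hc_smull, neg_one_mul]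
  have negr : ∀ x y, Hc x (-y) = -Hc x y := by
    intro x y; rw [Hc_symm, negl, Hc_symm]
  have subl : ∀ x y z, Hc (x - y) z = Hc x z - Hc y z := by
    intro x y z; rw [sub_eq_add_neg, Hc_addl, negl, sub_eq_add_neg]
  have subr : ∀ x y z, Hc x (y - z) = Hc x y - Hc x z := by
    intro x y z; rw [Hc_symm, subl, Hc_symm y x, Hc_symm z x]
  have h21 : Hc N2 N1 = fun _ => (-1 : ℂ) := by rw [Hc_symm]; exact h12
  have hnII0 : ∀ p, (nII p : ℂ) ≠ 0 := fun p => by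
    exact_mod_cast (hnII p).ne'
  have eZZ : Hc dGZ dGZ = (fun p => ((-2 * nII p * mH p : ℝ) : ℂ)) := by
    rw [hdGZ]
    simp only [subl, subr, Hc_addl, addr, negl, negr, Hc_smull, smulr, h11, h22, h12, h21]
    funext p
    simp only [Pi.sub_apply, Pi.mul_apply, Pi.zero_apply]
    push_cast [Pi.pow_apply]
    field_simp [hnII0 p]
    ring_nf
    try simp [Complex.I_sq]
    try ring_nf
    try ring
  have eWW : Hc dGW dGW = (fun p => -2 * ((mH p / nII p : ℝ) : ℂ)
      * ((((mH ^ 2) p - K p : ℝ) : ℂ) - Complex.I * (KN p : ℂ))) := by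
    rw [hdGW]
    simp only [subl, subr, Hc_addl, addr, negl, negr, Hc_smull, smulr, h11, h22, h12, h21]
    funext p
    simp only [Pi.add_apply, Pi.neg_apply, Pi.mul_apply, Pi.zero_apply]
    push_cast [Pi.pow_apply]
    field_simp [hnII0 p]
    ring_nf
    try simp [Complex.I_sq]
    try ring_nf
    try ring
  have eZW : Hc dGZ dGW = (fun p => ((2 * (mH ^ 2) p - K p : ℝ) : ℂ)
      - Complex.I * (KN p : ℂ)) := by
    rw [hdGZ, hdGW]
    simp only [subl, subr, Hc_addl, addr, negl, negr, Hc_smull, smulr, h11, h22, h12, h21]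
    funext p
    simp only [Pi.sub_apply, Pi.add_apply, Pi.neg_apply, Pi.mul_apply, Pi.zero_apply]
    push_cast [Pi.pow_apply]
    field_simp [hnII0 p]
    ring_nf
    try simp [Complex.I_sq]
    try ring_nf
    try ring
  refine ⟨eZZ, eWW, eZW, ?_, ?_⟩
  · rw [eZZ, eWW, eZW]
    funext p
    simp only [Pi.neg_apply, Pi.sub_apply, Pi.pow_apply, Pi.mul_apply]
    push_cast [Pi.pow_apply]
    field_simp [hnII0 p]
    ring_nf
    try simp [Complex.I_sq]
    try ring_nf
    try ring
  · constructor
    · rintro ⟨hA, hB, -⟩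
      have hmH : mH = 0 := by
        funext p
        have := congrFun (eZZ ▸ hA) p
        simp only [Pi.zero_apply] at this
        have : ((-2 * nII p * mH p : ℝ) : ℂ) = 0 := this
        have h2 : (-2 * nII p * mH p : ℝ) = 0 := by exact_mod_cast this
        have h3 : nII p * mH p = 0 := by linarith
        simp only [Pi.zero_apply]
        exact (mul_eq_zero.mp h3).resolve_left (hnII p).ne'
      refine ⟨hmH, ?_⟩
      funext p
      have := congrFun (eZW ▸ hB) p
      simp only [Pi.zero_apply] at this
      have him := congrArg Complex.im this
      simp [Complex.sub_im, Complex.mul_im, Pi.pow_apply, congrFun hmH p] at him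
      simpa using him
    · rintro ⟨hmH, hKN0⟩
      have hK0 : K = 0 := hflat hKN0
      have hsq0 : mH ^ 2 = (0 : Mp → ℝ) := by rw [hmH]; funext p; simp
      refine ⟨?_, ?_, ?_⟩
      · rw [eZZ]; funext p; rw [hmH]; simp
      · rw [eZW]; funext p; rw [hsq0, hK0, hKN0]; simp
      · rw [eWW]; funext p; rw [hmH]; simp
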